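/- Existence and uniqueness of polycyclic normal forms along the derived series: Let G be a finite solvable group with derived series G = G^{(1)} ⊇ G^{(2)} ⊇ ⋯ ⊇ G^{(s+1)} = 1, where G^{(i+1)} = [G^{(i)}, G^{(i)}]. Suppose that for each i ∈ {1, …, s} we are given elements g_{i,1}, …, g_{i,m_i} ∈ G^{(i)} whose images in the abelian quotient G^{(i)}/G^{(i+1)} realize G^{(i)}/G^{(i+1)} as the internal direct sum of the cyclic subgroups they generate, and let o_{i,j} denote the order of the image of g_{i,j} in G^{(i)}/G^{(i+1)}. Then every g ∈ G can be written as g = ∏_{i=1}^{s} ∏_{j=1}^{m_i} g_{i,j}^{δ_{i,j}}, the product taken in lexicographically increasing order of (i, j), for a unique family of natural numbers (δ_{i,j}) with 0 ≤ δ_{i,j} < o_{i,j} for all i, j. -/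

import Mathlib

theorem aux_ab {A : Type*} [CommGroup A] [Finite A] {m : ℕ} (a : Fin m → A)
    (hbij : Function.Bijective
      (fun f : (∀ j : Fin m, Subgroup.zpowers (a j)) => ∏ j, (f j : A)))
    (b : A) : ∃! ε : Fin m → ℕ, (∀ j, ε j < orderOf (a j)) ∧ b = ∏ j, a j ^ ε j := by
  obtain ⟨f, hf⟩ := hbij.2 b
  choose n hn using fun j =>
    ((isOfFinOrder_of_finite (a j)).mem_powers_iff_mem_zpowers.mpr (f j).2)
  have hn' : ∀ j, a j ^ n j = (f j : A) := fun j => hn j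
  have key : ∀ ε : Fin m → ℕ, ((∀ j, ε j < orderOf (a j)) ∧ b = ∏ j, a j ^ ε j) →
      ∀ j, a j ^ ε j = (f j : A) := by
    rintro ε ⟨hlt, hb⟩ j
    have hmem : ∀ j, a j ^ ε j ∈ Subgroup.zpowers (a j) := fun j =>
      ⟨(ε j : ℤ), by simp⟩
    have := hbij.1 (a₁ := fun j => ⟨a j ^ ε j, hmem j⟩) (a₂ := f)
      (by simpa using hb.symm.trans hf.symm)
    exact congrArg Subtype.val (congrFun this j)
  refine ⟨fun j => n j % orderOf (a j),
    ⟨fun j => Nat.mod_lt _ (orderOf_pos _), ?_⟩, ?_⟩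
  · rw [← hf]
    exact (Finset.prod_congr rfl fun j _ => by rw [pow_mod_orderOf, hn' j]).symm
  · intro ε hε
    funext j
    have h1 := key ε hε j
    have h2 : a j ^ (n j % orderOf (a j)) = (f j : A) := by rw [pow_mod_orderOf, hn' j]
    exact pow_injOn_Iio_orderOf (hε.1 j) (Nat.mod_lt _ (orderOf_pos _)) (h1.trans h2.symm)

theorem aux_drop_congr {M : Type*} {s : ℕ} (F F' : Fin s → M) (i : ℕ)
    (h : ∀ k : Fin s, i ≤ (k : ℕ) → F k = F' k) :
    (List.ofFn F).drop i = (List.ofFn F').drop i := by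
  apply List.ext_getElem
  · simp
  · intro k h1 h2
    simp only [List.getElem_drop, List.getElem_ofFn]
    exact h _ (by simp)

theorem aux_anti {G : Type*} [Group G] : Antitone (derivedSeries G) :=
  antitone_nat_of_succ_le fun n => by
    have := derivedSeries_normal G n
    rw [derivedSeries_succ]; exact Subgroup.commutator_le_right _ _

theorem aux_key {G : Type*} [Group G] [Finite G] (s : ℕ)
    (hsol : derivedSeries G s = ⊥)
    (mm : Fin s → ℕ) (gg : (i : Fin s) → Fin (mm i) → G)
    (hmem : ∀ (i : Fin s) (j : Fin (mm i)), gg i j ∈ derivedSeries G i)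
    (hds : ∀ i : Fin s, Function.Bijective
      (fun f : (∀ j : Fin (mm i), Subgroup.zpowers
          (Abelianization.of (⟨gg i j, hmem i j⟩ : ↥(derivedSeries G i)))) =>
        ∏ j, (f j : Abelianization ↥(derivedSeries G i)))) :
    ∀ t i : ℕ, i + t = s → ∀ x : G, x ∈ derivedSeries G i →
    ∃! δ : (k : Fin s) → Fin (mm k) → ℕ,
      (∀ (k : Fin s) (j : Fin (mm k)),
        δ k j < orderOf (Abelianization.of
          (⟨gg k j, hmem k j⟩ : ↥(derivedSeries G k)))) ∧
      (∀ k : Fin s, (k : ℕ) < i → δ k = fun _ => 0) ∧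
      x = ((List.ofFn fun k : Fin s =>
        (List.ofFn fun j : Fin (mm k) => gg k j ^ δ k j).prod).drop i).prod := by
  intro t
  induction t with
  | zero =>
    intro i hi x hx
    have hix : i = s := by omega
    subst hix
    rw [hsol, Subgroup.mem_bot] at hx
    refine ⟨fun _ _ => 0, ⟨fun k j => orderOf_pos _, fun _ _ => rfl, ?_⟩, ?_⟩
    · rw [List.drop_of_length_le (by simp), List.prod_nil, hx]
    · intro δ ⟨h1, h2, h3⟩
      funext k
      exact h2 k k.isLt
  | succ t IH =>
    intro i hi x hx
    have his : i < s := by omega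
    set I : Fin s := ⟨i, his⟩ with hI
    -- decomposition along the abelianization at level i
    have hε := aux_ab (fun j => Abelianization.of
        (⟨gg I j, hmem I j⟩ : ↥(derivedSeries G (I : ℕ)))) (hds I)
      (Abelianization.of (⟨x, hx⟩ : ↥(derivedSeries G (I : ℕ))))
    obtain ⟨ε, ⟨hε1, hε2⟩, hεu⟩ := hε
    -- the head element
    have hofprod : ∀ (e : Fin (mm I) → ℕ)
        (hp : (List.ofFn fun j => gg I j ^ e j).prod ∈ derivedSeries G (I : ℕ)),
        Abelianization.of (⟨(List.ofFn fun j => gg I j ^ e j).prod, hp⟩ :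
            ↥(derivedSeries G (I : ℕ))) =
          ∏ j, (Abelianization.of (⟨gg I j, hmem I j⟩ :
            ↥(derivedSeries G (I : ℕ)))) ^ e j := by
      intro e hp
      have heq : (⟨(List.ofFn fun j => gg I j ^ e j).prod, hp⟩ :
            ↥(derivedSeries G (I : ℕ))) =
          (List.ofFn fun j => (⟨gg I j, hmem I j⟩ :
            ↥(derivedSeries G (I : ℕ))) ^ e j).prod := by
        apply Subtype.ext
        simp [SubmonoidClass.coe_list_prod, List.map_ofFn, Function.comp_def]
      rw [heq, map_list_prod, List.map_ofFn, List.prod_ofFn]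
      exact Finset.prod_congr rfl fun j _ => map_pow Abelianization.of _ _
    have hpmem : ∀ (e : Fin (mm I) → ℕ),
        (List.ofFn fun j => gg I j ^ e j).prod ∈ derivedSeries G (I : ℕ) := by
      intro e
      apply Subgroup.list_prod_mem
      intro z hz
      obtain ⟨j, rfl⟩ := List.mem_ofFn.mp hz
      exact Subgroup.pow_mem _ (hmem I j) _
    set p : G := (List.ofFn fun j => gg I j ^ ε j).prod with hp
    -- membership transfer for the commutator kernel
    have hmap : Subgroup.map (derivedSeries G (I : ℕ)).subtype
        (commutator ↥(derivedSeries G (I : ℕ))) = derivedSeries G (i + 1) := by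
      rw [commutator_def, Subgroup.map_commutator, ← MonoidHom.range_eq_map,
        Subgroup.range_subtype, derivedSeries_succ]
    have hcomm_iff : ∀ z : ↥(derivedSeries G (I : ℕ)),
        z ∈ commutator ↥(derivedSeries G (I : ℕ)) ↔ (z : G) ∈ derivedSeries G (i + 1) := by
      intro z
      rw [← hmap]
      exact (Subgroup.mem_map_iff_mem (Subgroup.subtype_injective _)).symm
    -- the tail element
    have hofx : Abelianization.of (⟨x, hx⟩ : ↥(derivedSeries G (I : ℕ))) =
        Abelianization.of (⟨p, hpmem ε⟩ : ↥(derivedSeries G (I : ℕ))) := by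
      rw [hofprod ε (hpmem ε)]; exact hε2
    have hy : p⁻¹ * x ∈ derivedSeries G (i + 1) := by
      have h1 : (⟨p, hpmem ε⟩ : ↥(derivedSeries G (I : ℕ)))⁻¹ * ⟨x, hx⟩ ∈
          commutator ↥(derivedSeries G (I : ℕ)) := QuotientGroup.eq.mp hofx.symm
      exact (hcomm_iff _).mp h1
    obtain ⟨δ', ⟨hδ'1, hδ'2, hδ'3⟩, hδ'u⟩ := IH (i + 1) (by omega) (p⁻¹ * x) hy
    classical
    refine ⟨Function.update δ' I ε, ⟨?_, ?_, ?_⟩, ?_⟩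
    · intro k j
      by_cases hk : k = I
      · subst hk; rw [Function.update_self]; exact hε1 j
      · rw [Function.update_of_ne hk]; exact hδ'1 k j
    · intro k hk
      have hkI : k ≠ I := by
        intro h; rw [h] at hk; simp [hI] at hk
      rw [Function.update_of_ne hkI]
      exact hδ'2 k (by omega)
    · -- product identity
      have hlen : i < (List.ofFn fun k : Fin s =>
          (List.ofFn fun j : Fin (mm k) => gg k j ^ Function.update δ' I ε k j).prod).length := by
        simp [his]
      have htail : ((List.ofFn fun k : Fin s =>
          (List.ofFn fun j : Fin (mm k) => gg k j ^ Function.update δ' I ε k j).prod).drop (i+1)) =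
          ((List.ofFn fun k : Fin s =>
          (List.ofFn fun j : Fin (mm k) => gg k j ^ δ' k j).prod).drop (i+1)) := by
        apply aux_drop_congr
        intro k hk
        have hkI : k ≠ I := by
          intro h; rw [h] at hk; simp [hI] at hk
        rw [Function.update_of_ne hkI]
      rw [List.drop_eq_getElem_cons hlen, List.prod_cons, List.getElem_ofFn, htail, ← hδ'3]
      show x = (List.ofFn fun j => gg I j ^ Function.update δ' I ε I j).prod * (p⁻¹ * x)
      rw [Function.update_self]
      exact (mul_inv_cancel_left p x).symm
    · -- uniqueness
      intro δ₂ ⟨h1, h2, h3⟩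
      have hlen2 : i < (List.ofFn fun k : Fin s =>
          (List.ofFn fun j : Fin (mm k) => gg k j ^ δ₂ k j).prod).length := by
        simp [his]
      rw [List.drop_eq_getElem_cons hlen2, List.prod_cons, List.getElem_ofFn] at h3
      set y₂ : G := ((List.ofFn fun k : Fin s =>
          (List.ofFn fun j : Fin (mm k) => gg k j ^ δ₂ k j).prod).drop (i+1)).prod with hy₂
      have h3' : x = (List.ofFn fun j => gg I j ^ δ₂ I j).prod * y₂ := h3
      have hy₂mem : y₂ ∈ derivedSeries G (i + 1) := by
        rw [hy₂]
        apply Subgroup.list_prod_mem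
        intro z hz
        obtain ⟨mIdx, hm, hzz⟩ := List.mem_iff_getElem.mp hz
        rw [List.getElem_drop, List.getElem_ofFn] at hzz
        subst hzz
        apply Subgroup.list_prod_mem
        intro w hw
        obtain ⟨j, rfl⟩ := List.mem_ofFn.mp hw
        exact aux_anti (by simp) (Subgroup.pow_mem _ (hmem _ j) _)
      have hy₂memI : y₂ ∈ derivedSeries G (I : ℕ) := aux_anti (Nat.le_succ i) hy₂mem
      have hof2 : Abelianization.of (⟨x, hx⟩ : ↥(derivedSeries G (I : ℕ))) =
          ∏ j, (Abelianization.of (⟨gg I j, hmem I j⟩ :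
            ↥(derivedSeries G (I : ℕ)))) ^ δ₂ I j := by
        have hxeq : (⟨x, hx⟩ : ↥(derivedSeries G (I : ℕ))) =
            ⟨(List.ofFn fun j => gg I j ^ δ₂ I j).prod, hpmem _⟩ * ⟨y₂, hy₂memI⟩ := by
          apply Subtype.ext; simpa using h3'
        have hone : Abelianization.of (⟨y₂, hy₂memI⟩ : ↥(derivedSeries G (I : ℕ))) = 1 :=
          (QuotientGroup.eq_one_iff _).mpr ((hcomm_iff _).mpr hy₂mem)
        rw [hxeq, map_mul, hofprod, hone, mul_one]
      have hε₂ : δ₂ I = ε := hεu (δ₂ I) ⟨fun j => h1 I j, hof2⟩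
      have hhead2 : (List.ofFn fun j => gg I j ^ δ₂ I j).prod = p := by rw [hε₂]
      have h3'' : p⁻¹ * x = y₂ := by rw [h3', hhead2]; group
      have hδ₂' : Function.update δ₂ I (fun _ => 0) = δ' := by
        apply hδ'u
        refine ⟨?_, ?_, ?_⟩
        · intro k j
          by_cases hk : k = I
          · subst hk; rw [Function.update_self]; exact orderOf_pos _
          · rw [Function.update_of_ne hk]; exact h1 k j
        · intro k hk
          by_cases hk2 : k = I
          · subst hk2; rw [Function.update_self]
          · rw [Function.update_of_ne hk2]
            have hne : (k : ℕ) ≠ i := fun h => hk2 (Fin.ext h)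
            exact h2 k (by omega)
        · rw [h3'', hy₂]
          congr 1
          exact (aux_drop_congr _ _ _ fun k hk => by
            have hkI : k ≠ I := by
              intro h; rw [h] at hk; simp [hI] at hk
            rw [Function.update_of_ne hkI]).symm
      funext k
      by_cases hk : k = I
      · subst hk; rw [Function.update_self]; exact hε₂
      · rw [Function.update_of_ne hk]
        have hc := congrFun hδ₂' k
        rwa [Function.update_of_ne hk] at hc

/-- Existence and uniqueness of polycyclic normal forms along the derived series.
The abelian quotient `G^(i)/G^(i+1)` is formalized as the abelianization of the
subgroup `derivedSeries G i` (note `derivedSeries G 0 = G`, matching `G^(1) = G`). -/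
theorem stmt_15 {G : Type*} [Group G] [Finite G] (s : ℕ)
    (hsol : derivedSeries G s = ⊥)
    (mm : Fin s → ℕ) (gg : (i : Fin s) → Fin (mm i) → G)
    (hmem : ∀ (i : Fin s) (j : Fin (mm i)), gg i j ∈ derivedSeries G i)
    (hds : ∀ i : Fin s, Function.Bijective
      (fun f : (∀ j : Fin (mm i), Subgroup.zpowers
          (Abelianization.of (⟨gg i j, hmem i j⟩ : ↥(derivedSeries G i)))) =>
        ∏ j, (f j : Abelianization ↥(derivedSeries G i)))) :
    ∀ x : G, ∃! δ : (i : Fin s) → Fin (mm i) → ℕ,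
      (∀ (i : Fin s) (j : Fin (mm i)),
        δ i j < orderOf (Abelianization.of
          (⟨gg i j, hmem i j⟩ : ↥(derivedSeries G i)))) ∧
      x = (List.ofFn fun i : Fin s =>
        (List.ofFn fun j : Fin (mm i) => gg i j ^ δ i j).prod).prod := by
  intro x
  obtain ⟨δ, ⟨c1, c2, c3⟩, huniq⟩ := aux_key s hsol mm gg hmem hds s 0 (by omega) x
    (by rw [derivedSeries_zero]; exact Subgroup.mem_top x)
  refine ⟨δ, ⟨c1, by rw [c3, List.drop_zero]⟩, ?_⟩
  intro δ₂ ⟨d1, d2⟩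
  exact huniq δ₂ ⟨d1, fun k hk => absurd hk (Nat.not_lt_zero _), by rw [List.drop_zero]; exact d2⟩
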